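/- Let a, b > 0 and let Θ be uniformly distributed on [0, 2π]. Then the random variable Γ = √(a² + b² + 2ab·cos(2Θ)) has probability density ρ(γ) = (2/π)·γ/√((（a+b)²−γ²)(γ²−(a−b)²)) on (|a−b|, a+b). -/

import Mathlib

open MeasureTheory Real Set Filter
open scoped ENNReal Topology

lemma cos_le_iff_aux {c u : ℝ} (hc : -1 ≤ c) (h0 : 0 ≤ u) (h2 : u ≤ 2 * π) :
    Real.cos u ≤ c ↔ Real.arccos c ≤ u ∧ u ≤ 2 * π - Real.arccos c := by
  have hα0 := Real.arccos_nonneg c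
  have hαπ := Real.arccos_le_pi c
  have hπ := Real.pi_pos
  have key : ∀ v : ℝ, 0 ≤ v → v ≤ π → (Real.cos v ≤ c ↔ Real.arccos c ≤ v) := by
    intro v hv0 hvπ
    rcases le_or_gt c 1 with hc1 | hc1
    · have hcos : Real.cos (Real.arccos c) = c := Real.cos_arccos hc hc1
      nth_rewrite 1 [← hcos]
      exact Real.strictAntiOn_cos.le_iff_ge ⟨hv0, hvπ⟩ ⟨hα0, hαπ⟩
    · have : Real.arccos c = 0 := Real.arccos_eq_zero.2 hc1.le
      rw [this]
      simp only [hv0, iff_true]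
      exact (Real.cos_le_one v).trans hc1.le
  rcases le_or_gt u π with hu | hu
  · rw [key u h0 hu]
    constructor
    · exact fun h => ⟨h, by linarith⟩
    · exact fun h => h.1
  · have h1 : Real.cos u = Real.cos (2 * π - u) := by
      rw [Real.cos_two_pi_sub]
    rw [h1, key (2 * π - u) (by linarith) (by linarith)]
    constructor
    · intro h; exact ⟨by linarith, by linarith⟩
    · intro h; linarith [h.2]

lemma cos_two_set_eq {c : ℝ} (hc : -1 ≤ c) :
    {θ : ℝ | θ ∈ Icc 0 (2 * π) ∧ Real.cos (2 * θ) ≤ c} =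
      Icc (Real.arccos c / 2) (π - Real.arccos c / 2) ∪
      Icc (π + Real.arccos c / 2) (2 * π - Real.arccos c / 2) := by
  have hα0 := Real.arccos_nonneg c
  have hαπ := Real.arccos_le_pi c
  have hπ := Real.pi_pos
  ext θ
  simp only [mem_setOf_eq, mem_Icc, mem_union]
  constructor
  · rintro ⟨⟨h0, h2⟩, hcos⟩
    rcases le_or_gt θ π with hθ | hθ
    · left
      have := (cos_le_iff_aux hc (by linarith) (by linarith)).1 hcos
      constructor <;> linarith [this.1, this.2]
    · right
      have h1 : Real.cos (2 * θ) = Real.cos (2 * θ - 2 * π) := by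
        rw [Real.cos_sub_two_pi]
      rw [h1] at hcos
      have := (cos_le_iff_aux hc (by linarith) (by linarith)).1 hcos
      constructor <;> linarith [this.1, this.2]
  · rintro (⟨h1, h2⟩ | ⟨h1, h2⟩)
    · refine ⟨⟨by linarith, by linarith⟩, ?_⟩
      exact (cos_le_iff_aux hc (by linarith) (by linarith)).2 ⟨by linarith, by linarith⟩
    · refine ⟨⟨by linarith, by linarith⟩, ?_⟩
      have h3 : Real.cos (2 * θ) = Real.cos (2 * θ - 2 * π) := by
        rw [Real.cos_sub_two_pi]
      rw [h3]
      exact (cos_le_iff_aux hc (by linarith) (by linarith)).2 ⟨by linarith, by linarith⟩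

lemma cos_two_volume {c : ℝ} (hc : -1 ≤ c) (hc1 : c < 1) :
    volume {θ : ℝ | θ ∈ Icc 0 (2 * π) ∧ Real.cos (2 * θ) ≤ c} =
      ENNReal.ofReal (2 * (π - Real.arccos c)) := by
  have hα0 : 0 < Real.arccos c := Real.arccos_pos.2 hc1
  have hαπ := Real.arccos_le_pi c
  have hπ := Real.pi_pos
  rw [cos_two_set_eq hc]
  rw [measure_union ?_ measurableSet_Icc]
  · rw [Real.volume_Icc, Real.volume_Icc, ← ENNReal.ofReal_add (by linarith) (by linarith)]
    congr 1
    ring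
  · apply Set.disjoint_left.2
    intro x hx hx'
    simp only [mem_Icc] at hx hx'
    linarith [hx.2, hx'.1]

lemma hasDerivAt_F {a b γ : ℝ} (ha : 0 < a) (hb : 0 < b) (h1 : |a - b| < γ) (h2 : γ < a + b) :
    HasDerivAt (fun y => (Real.arcsin ((y ^ 2 - a ^ 2 - b ^ 2) / (2 * a * b)) + π / 2) / π)
      (2 / π * γ / Real.sqrt (((a + b) ^ 2 - γ ^ 2) * (γ ^ 2 - (a - b) ^ 2))) γ := by
  have hπ := Real.pi_pos
  have hγ0 : 0 < γ := lt_of_le_of_lt (abs_nonneg _) h1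
  have hab : 0 < 2 * a * b := by positivity
  have hsq1 : (a - b) ^ 2 < γ ^ 2 := by
    rw [← sq_abs (a - b)]
    exact pow_lt_pow_left₀ h1 (abs_nonneg _) two_ne_zero
  have hsq2 : γ ^ 2 < (a + b) ^ 2 := pow_lt_pow_left₀ h2 hγ0.le two_ne_zero
  set P : ℝ := ((a + b) ^ 2 - γ ^ 2) * (γ ^ 2 - (a - b) ^ 2) with hP
  have hPpos : 0 < P := mul_pos (by linarith) (by linarith)
  set c : ℝ := (γ ^ 2 - a ^ 2 - b ^ 2) / (2 * a * b) with hcdef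
  have hc1 : -1 < c := by
    rw [hcdef, lt_div_iff₀ hab]
    nlinarith
  have hc2 : c < 1 := by
    rw [hcdef, div_lt_iff₀ hab]
    nlinarith
  have hinner : HasDerivAt (fun y : ℝ => (y ^ 2 - a ^ 2 - b ^ 2) / (2 * a * b))
      (2 * γ / (2 * a * b)) γ := by
    have h := (((hasDerivAt_pow 2 γ).sub_const (a ^ 2)).sub_const (b ^ 2)).div_const (2 * a * b)
    simpa using h
  have harc : HasDerivAt Real.arcsin (1 / Real.sqrt (1 - c ^ 2)) c :=
    Real.hasDerivAt_arcsin hc1.ne' hc2.ne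
  have hcomp := (harc.comp γ hinner).add_const (π / 2)
  have hfinal := hcomp.div_const π
  convert hfinal using 1
  · rfl
  · rfl
  · rfl
  have h1mc : 1 - c ^ 2 = P / (2 * a * b) ^ 2 := by
    rw [hcdef, hP]
    field_simp
    ring
  have hsqrtP : 0 < Real.sqrt P := Real.sqrt_pos.2 hPpos
  have h4 : Real.sqrt (1 - c ^ 2) = Real.sqrt P / (2 * a * b) := by
    rw [h1mc, Real.sqrt_div hPpos.le, Real.sqrt_sq hab.le]
  rw [h4]
  field_simp

lemma lint_Ioc {a b s x : ℝ} (ha : 0 < a) (hb : 0 < b) (hs : |a - b| < s) (hsx : s ≤ x)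
    (hx : x < a + b) :
    ∫⁻ γ in Ioc s x,
        ENNReal.ofReal (2 / π * γ / Real.sqrt (((a + b) ^ 2 - γ ^ 2) * (γ ^ 2 - (a - b) ^ 2))) =
      ENNReal.ofReal ((Real.arcsin ((x ^ 2 - a ^ 2 - b ^ 2) / (2 * a * b)) + π / 2) / π -
        (Real.arcsin ((s ^ 2 - a ^ 2 - b ^ 2) / (2 * a * b)) + π / 2) / π) := by
  have hπ := Real.pi_pos
  set ρ : ℝ → ℝ :=
    fun γ => 2 / π * γ / Real.sqrt (((a + b) ^ 2 - γ ^ 2) * (γ ^ 2 - (a - b) ^ 2)) with hρ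
  have hmem : ∀ t ∈ Icc s x, |a - b| < t ∧ t < a + b := by
    intro t ht
    exact ⟨lt_of_lt_of_le hs ht.1, lt_of_le_of_lt ht.2 hx⟩
  have hcont : ContinuousOn ρ (Icc s x) := by
    apply ContinuousOn.div
    · exact (Continuous.continuousOn (by continuity))
    · exact Real.continuous_sqrt.comp_continuousOn (Continuous.continuousOn (by continuity))
    · intro t ht
      obtain ⟨h1, h2⟩ := hmem t ht
      have ht0 : 0 < t := lt_of_le_of_lt (abs_nonneg _) h1
      have hsq1 : (a - b) ^ 2 < t ^ 2 := by
        rw [← sq_abs (a - b)]; exact pow_lt_pow_left₀ h1 (abs_nonneg _) two_ne_zero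
      have hsq2 : t ^ 2 < (a + b) ^ 2 := pow_lt_pow_left₀ h2 ht0.le two_ne_zero
      exact (Real.sqrt_pos.2 (mul_pos (by linarith) (by linarith))).ne'
  have hint : IntervalIntegrable ρ volume s x := by
    rw [intervalIntegrable_iff_integrableOn_Icc_of_le hsx]
    exact hcont.integrableOn_Icc
  have hFTC := intervalIntegral.integral_eq_sub_of_hasDerivAt (f := fun y =>
      (Real.arcsin ((y ^ 2 - a ^ 2 - b ^ 2) / (2 * a * b)) + π / 2) / π)
      (f' := ρ) (a := s) (b := x) ?_ hint
  · rw [← hFTC]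
    rw [intervalIntegral.integral_of_le hsx]
    rw [← ofReal_integral_eq_lintegral_ofReal]
    · exact hcont.integrableOn_Icc.mono_set Ioc_subset_Icc_self
    · refine (ae_restrict_iff' measurableSet_Ioc).2 (Filter.Eventually.of_forall ?_)
      intro t ht
      have h1 := (hmem t ⟨ht.1.le, ht.2⟩).1
      have ht0 : 0 < t := lt_of_le_of_lt (abs_nonneg _) h1
      positivity
  · intro t ht
    rw [uIcc_of_le hsx] at ht
    obtain ⟨h1, h2⟩ := hmem t ht
    exact hasDerivAt_F ha hb h1 h2

lemma lint_Ioo {a b x : ℝ} (ha : 0 < a) (hb : 0 < b) (hl : |a - b| < x) (hx : x ≤ a + b) :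
    ∫⁻ γ in Ioo (|a - b|) x,
        ENNReal.ofReal (2 / π * γ / Real.sqrt (((a + b) ^ 2 - γ ^ 2) * (γ ^ 2 - (a - b) ^ 2))) =
      ENNReal.ofReal ((Real.arcsin ((x ^ 2 - a ^ 2 - b ^ 2) / (2 * a * b)) + π / 2) / π -
        (Real.arcsin (((|a - b|) ^ 2 - a ^ 2 - b ^ 2) / (2 * a * b)) + π / 2) / π) := by
  set l : ℝ := |a - b| with hldef
  set F : ℝ → ℝ := fun y => (Real.arcsin ((y ^ 2 - a ^ 2 - b ^ 2) / (2 * a * b)) + π / 2) / π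
    with hFdef
  set ρ' : ℝ → ℝ≥0∞ :=
    fun γ => ENNReal.ofReal (2 / π * γ / Real.sqrt (((a + b) ^ 2 - γ ^ 2) * (γ ^ 2 - (a - b) ^ 2)))
    with hρdef
  set ν : Measure ℝ := volume.withDensity ρ' with hν
  have hd : 0 < (x - l) / 2 := by linarith
  set d : ℝ := (x - l) / 2 with hddef
  set s : ℕ → ℝ := fun n => l + d / (n + 1) with hsdef
  set t : ℕ → ℝ := fun n => x - d / (n + 1) with htdef
  have hdn : ∀ n : ℕ, 0 < d / (n + 1) ∧ d / (n + 1) ≤ d := by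
    intro n
    constructor
    · positivity
    · rw [div_le_iff₀ (by positivity)]
      nlinarith [Nat.cast_nonneg (α := ℝ) n]
  have hU : Ioo l x = ⋃ n, Ioc (s n) (t n) := by
    ext γ
    simp only [mem_Ioo, mem_iUnion, mem_Ioc, hsdef, htdef]
    constructor
    · rintro ⟨h1, h2⟩
      set ε : ℝ := min (γ - l) (x - γ) with hε
      have hε0 : 0 < ε := lt_min (by linarith) (by linarith)
      obtain ⟨n, hn⟩ := exists_nat_gt (d / ε)
      have hlt : d / (n + 1) < ε := by
        rw [div_lt_iff₀ (by positivity)]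
        have : d / ε < n + 1 := lt_of_lt_of_le hn (by linarith)
        rw [div_lt_iff₀ hε0] at this
        linarith
      exact ⟨n, by linarith [min_le_left (γ - l) (x - γ), hlt],
        by linarith [min_le_right (γ - l) (x - γ), hlt]⟩
    · rintro ⟨n, h1, h2⟩
      exact ⟨by linarith [(hdn n).1], by linarith [(hdn n).1]⟩
  have hmono : Monotone fun n => Ioc (s n) (t n) := by
    intro n m hnm
    apply Ioc_subset_Ioc
    · simp only [hsdef]
      have : (n : ℝ) + 1 ≤ (m : ℝ) + 1 := by exact_mod_cast Nat.succ_le_succ hnm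
      gcongr
    · simp only [htdef]
      have : (n : ℝ) + 1 ≤ (m : ℝ) + 1 := by exact_mod_cast Nat.succ_le_succ hnm
      gcongr
  have key : ∀ n, ν (Ioc (s n) (t n)) = ENNReal.ofReal (F (t n) - F (s n)) := by
    intro n
    rw [hν, withDensity_apply _ measurableSet_Ioc]
    have h1 : l < s n := by simp only [hsdef]; linarith [(hdn n).1]
    have h2 : s n ≤ t n := by simp only [hsdef, htdef]; linarith [(hdn n).2, (hdn n).1]
    have h3 : t n < a + b := by
      simp only [htdef]; linarith [(hdn n).1]
    exact lint_Ioc ha hb h1 h2 h3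
  have h1 : Tendsto (fun n => ν (Ioc (s n) (t n))) atTop (𝓝 (ν (Ioo l x))) := by
    rw [hU]
    exact tendsto_measure_iUnion_atTop hmono
  have htend_s : Tendsto s atTop (𝓝 l) := by
    have : Tendsto (fun n : ℕ => d / (n + 1)) atTop (𝓝 0) := by
      simpa [div_eq_mul_inv] using tendsto_one_div_add_atTop_nhds_zero_nat.const_mul d
    simpa using tendsto_const_nhds.add this
  have htend_t : Tendsto t atTop (𝓝 x) := by
    have : Tendsto (fun n : ℕ => d / (n + 1)) atTop (𝓝 0) := by
      simpa [div_eq_mul_inv] using tendsto_one_div_add_atTop_nhds_zero_nat.const_mul d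
    simpa using tendsto_const_nhds.sub this
  have hFcont : Continuous F := by
    apply Continuous.div_const
    apply Continuous.add _ continuous_const
    exact Real.continuous_arcsin.comp (by continuity)
  have h2 : Tendsto (fun n => ENNReal.ofReal (F (t n) - F (s n))) atTop
      (𝓝 (ENNReal.ofReal (F x - F l))) := by
    apply ENNReal.continuous_ofReal.continuousAt.tendsto.comp
    exact ((hFcont.continuousAt.tendsto.comp htend_t).sub
      (hFcont.continuousAt.tendsto.comp htend_s))
  simp only [key] at h1
  have := tendsto_nhds_unique h1 h2
  rw [withDensity_apply _ measurableSet_Ioo] at this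
  exact this

theorem symmetric_gap_pushforward (a b : ℝ) (ha : 0 < a) (hb : 0 < b) :
    Measure.map (fun θ => Real.sqrt (a ^ 2 + b ^ 2 + 2 * a * b * Real.cos (2 * θ)))
      ((volume.restrict (Icc 0 (2 * π))).withDensity fun _ => ENNReal.ofReal (1 / (2 * π))) =
    volume.withDensity fun γ =>
      ENNReal.ofReal
        (if |a - b| < γ ∧ γ < a + b then
          (2 / π) * γ / Real.sqrt (((a + b) ^ 2 - γ ^ 2) * (γ ^ 2 - (a - b) ^ 2))
        else 0) := by
  have hπ := Real.pi_pos
  have hab : (0:ℝ) < 2 * a * b := by positivity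
  set l : ℝ := |a - b| with hldef
  set r : ℝ := a + b with hrdef
  have hl0 : 0 ≤ l := abs_nonneg _
  have hlr : l < r := abs_lt.2 ⟨by simp only [hrdef]; linarith, by simp only [hrdef]; linarith⟩
  set f : ℝ → ℝ := fun θ => Real.sqrt (a ^ 2 + b ^ 2 + 2 * a * b * Real.cos (2 * θ)) with hfdef
  have hfm : Measurable f := by
    apply Continuous.measurable
    exact Real.continuous_sqrt.comp (by continuity)
  set μ : Measure ℝ :=
    (volume.restrict (Icc 0 (2 * π))).withDensity fun _ => ENNReal.ofReal (1 / (2 * π)) with hμ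
  have hμ' : μ = (ENNReal.ofReal (1 / (2 * π))) • (volume.restrict (Icc 0 (2 * π))) :=
    withDensity_const _
  haveI : IsFiniteMeasure μ := by
    constructor
    rw [hμ', Measure.smul_apply, smul_eq_mul, Measure.restrict_apply_univ, Real.volume_Icc]
    exact ENNReal.mul_lt_top ENNReal.ofReal_lt_top ENNReal.ofReal_lt_top
  -- rewrite RHS density as indicator
  have hdens : (fun γ : ℝ =>
      ENNReal.ofReal
        (if |a - b| < γ ∧ γ < a + b then
          (2 / π) * γ / Real.sqrt (((a + b) ^ 2 - γ ^ 2) * (γ ^ 2 - (a - b) ^ 2))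
        else 0)) =
      (Ioo l r).indicator (fun γ =>
        ENNReal.ofReal (2 / π * γ / Real.sqrt (((a + b) ^ 2 - γ ^ 2) * (γ ^ 2 - (a - b) ^ 2)))) := by
    funext γ
    by_cases h : γ ∈ Ioo l r
    · rw [indicator_of_mem h]
      simp only [mem_Ioo] at h
      rw [if_pos ⟨h.1, h.2⟩]
    · rw [indicator_of_notMem h]
      simp only [mem_Ioo, not_and_or, not_lt] at h
      rw [if_neg (by simp only [mem_Ioo, not_and_or, not_lt]; exact h), ENNReal.ofReal_zero]
  rw [hdens, withDensity_indicator measurableSet_Ioo]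
  apply Measure.ext_of_Iic
  intro x
  rw [Measure.map_apply hfm measurableSet_Iic]
  rw [hμ', Measure.smul_apply, smul_eq_mul, Measure.restrict_apply (hfm measurableSet_Iic)]
  rw [withDensity_apply _ measurableSet_Iic, Measure.restrict_restrict measurableSet_Iic]
  rcases lt_or_ge x l with hx | hx
  · -- x < l : both sides zero
    have h1 : f ⁻¹' Iic x ∩ Icc 0 (2 * π) = ∅ := by
      apply eq_empty_iff_forall_notMem.2
      rintro θ ⟨hθ1, _⟩
      simp only [mem_preimage, mem_Iic, hfdef] at hθ1
      have h2 : l ≤ f θ := by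
        rw [hfdef]
        calc l = Real.sqrt ((a - b) ^ 2) := by rw [Real.sqrt_sq_eq_abs]
        _ ≤ _ := Real.sqrt_le_sqrt (by nlinarith [Real.neg_one_le_cos (2 * θ)])
      simp only [hfdef] at h2
      linarith
    have h2 : Iic x ∩ Ioo l r = ∅ := by
      apply eq_empty_iff_forall_notMem.2
      rintro γ ⟨hγ1, hγ2⟩
      simp only [mem_Iic] at hγ1
      simp only [mem_Ioo] at hγ2
      linarith [hγ2.1]
    rw [h1, h2]
    simp
  rcases lt_or_ge x r with hxr | hxr
  · -- l ≤ x < r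
    have hx0 : 0 ≤ x := le_trans hl0 hx
    set c : ℝ := (x ^ 2 - a ^ 2 - b ^ 2) / (2 * a * b) with hcdef
    have hsq1 : (a - b) ^ 2 ≤ x ^ 2 := by
      rw [← sq_abs (a - b)]
      exact pow_le_pow_left₀ (abs_nonneg _) hx 2
    have hsq2 : x ^ 2 < r ^ 2 := by
      rw [hrdef]; exact pow_lt_pow_left₀ hxr hx0 two_ne_zero
    have hc1 : -1 ≤ c := by
      rw [hcdef, le_div_iff₀ hab]; nlinarith
    have hc2 : c < 1 := by
      rw [hcdef, div_lt_iff₀ hab]; nlinarith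
    -- LHS set
    have hset : f ⁻¹' Iic x ∩ Icc 0 (2 * π) =
        {θ : ℝ | θ ∈ Icc 0 (2 * π) ∧ Real.cos (2 * θ) ≤ c} := by
      ext θ
      simp only [mem_inter_iff, mem_preimage, mem_Iic, mem_setOf_eq, hfdef]
      rw [Real.sqrt_le_left hx0]
      constructor
      · rintro ⟨h1, h2⟩
        refine ⟨h2, ?_⟩
        rw [hcdef, le_div_iff₀ hab]
        linarith
      · rintro ⟨h1, h2⟩
        rw [hcdef, le_div_iff₀ hab] at h2
        exact ⟨by linarith, h1⟩
    rw [hset, cos_two_volume hc1 hc2]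
    -- RHS set
    have hset2 : Iic x ∩ Ioo l r = Ioc l x := by
      ext γ
      simp only [mem_inter_iff, mem_Iic, mem_Ioo, mem_Ioc]
      constructor
      · rintro ⟨h1, h2, h3⟩; exact ⟨h2, h1⟩
      · rintro ⟨h1, h2⟩; exact ⟨h2, h1, lt_of_le_of_lt h2 hxr⟩
    rw [hset2, Measure.restrict_congr_set Ioo_ae_eq_Ioc.symm]
    rcases eq_or_lt_of_le hx with hxl | hxl
    · -- x = l : both sides zero
      have hc_eq : c = -1 := by
        rw [hcdef, div_eq_iff hab.ne', ← hxl, hldef]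
        rw [sq_abs]; ring
      rw [← hxl]
      simp only [Ioo_self, Measure.restrict_empty, lintegral_zero_measure]
      rw [hc_eq, Real.arccos_neg_one]
      simp
    · rw [lint_Ioo ha hb hxl (le_of_lt hxr)]
      have hFl : Real.arcsin ((l ^ 2 - a ^ 2 - b ^ 2) / (2 * a * b)) = -(π / 2) := by
        have : (l ^ 2 - a ^ 2 - b ^ 2) / (2 * a * b) = -1 := by
          rw [div_eq_iff hab.ne', hldef, sq_abs]; ring
        rw [this, Real.arcsin_neg_one]
      rw [hFl]
      rw [← ENNReal.ofReal_mul (by positivity)]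
      congr 1
      have harc : Real.arcsin c = π / 2 - Real.arccos c := by
        rw [Real.arccos_eq_pi_div_two_sub_arcsin]; ring
      rw [hcdef] at harc ⊢
      rw [harc]
      field_simp
      ring
  · -- r ≤ x
    have hset : f ⁻¹' Iic x ∩ Icc 0 (2 * π) = Icc 0 (2 * π) := by
      apply inter_eq_self_of_subset_right
      intro θ _
      simp only [mem_preimage, mem_Iic, hfdef]
      calc Real.sqrt (a ^ 2 + b ^ 2 + 2 * a * b * Real.cos (2 * θ))
          ≤ Real.sqrt (r ^ 2) := Real.sqrt_le_sqrt (by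
            rw [hrdef]; nlinarith [Real.cos_le_one (2 * θ)])
        _ = r := Real.sqrt_sq (by rw [hrdef]; linarith)
        _ ≤ x := hxr
    have hset2 : Iic x ∩ Ioo l r = Ioo l r := by
      apply inter_eq_self_of_subset_right
      intro γ hγ
      simp only [mem_Ioo] at hγ
      exact le_trans hγ.2.le hxr
    rw [hset, hset2, Real.volume_Icc]
    rw [lint_Ioo ha hb hlr le_rfl]
    have hFl : Real.arcsin ((l ^ 2 - a ^ 2 - b ^ 2) / (2 * a * b)) = -(π / 2) := by
      have : (l ^ 2 - a ^ 2 - b ^ 2) / (2 * a * b) = -1 := by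
        rw [div_eq_iff hab.ne', hldef, sq_abs]; ring
      rw [this, Real.arcsin_neg_one]
    have hFr : Real.arcsin ((r ^ 2 - a ^ 2 - b ^ 2) / (2 * a * b)) = π / 2 := by
      have : (r ^ 2 - a ^ 2 - b ^ 2) / (2 * a * b) = 1 := by
        rw [div_eq_iff hab.ne', hrdef]; ring
      rw [this, Real.arcsin_one]
    rw [hFl, hFr]
    rw [← ENNReal.ofReal_mul (by positivity)]
    congr 1
    field_simp
    ring
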